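/- Let f ∈ L¹(ℝ⁴) be compactly supported and suppose the light ray transform Lf(x,θ) = ∫_ℝ f(s, x+sθ) ds vanishes for all x ∈ ℝ³ and all θ ∈ 𝕊². Then the Fourier transform 𝓕f(τ,ξ) vanishes on the space-like cone {(τ,ξ) : τ² < |ξ|²}. -/

import Mathlib

noncomputable section
open MeasureTheory

/-- The spacetime Fourier transform on `ℝ⁴ = ℝ_t × ℝ³_x`, with the convention
`𝓕f(τ,ξ) = ∫ e^{−i(tτ + x·ξ)} f(t,x) dt dx`. -/
def spacetimeFourier (f : ℝ × EuclideanSpace ℝ (Fin 3) → ℂ)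
    (τ : ℝ) (ξ : EuclideanSpace ℝ (Fin 3)) : ℂ :=
  ∫ p : ℝ × EuclideanSpace ℝ (Fin 3),
    Complex.exp (-(Complex.I * ((p.1 * τ + inner ℝ p.2 ξ : ℝ) : ℂ))) * f p

open scoped RealInnerProductSpace

/-- For every space-like covector `(τ, ξ)` there is a unit vector `θ` with `⟪θ, ξ⟫ = -τ`. -/
lemma exists_unit_inner_eq (ξ : EuclideanSpace ℝ (Fin 3)) (τ : ℝ) (hsp : τ ^ 2 < ‖ξ‖ ^ 2) :
    ∃ θ : EuclideanSpace ℝ (Fin 3), ‖θ‖ = 1 ∧ ⟪θ, ξ⟫ = -τ := by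
  have hξn : 0 < ‖ξ‖ := by nlinarith [sq_nonneg τ, norm_nonneg ξ]
  have hξ : ξ ≠ 0 := by simpa using hξn.ne'
  have hbot : ((ℝ ∙ ξ)ᗮ : Submodule ℝ (EuclideanSpace ℝ (Fin 3))) ≠ ⊥ := by
    intro h
    have htop : (ℝ ∙ ξ) = ⊤ := by rwa [Submodule.orthogonal_eq_bot_iff] at h
    have h1 : Module.finrank ℝ (ℝ ∙ ξ) = 1 := finrank_span_singleton hξ
    rw [htop] at h1
    simp [finrank_euclideanSpace] at h1
  obtain ⟨v, hv, hv0⟩ := Submodule.exists_mem_ne_zero_of_ne_bot hbot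
  have hvξ : ⟪v, ξ⟫ = 0 := by
    have := (Submodule.mem_orthogonal _ v).mp hv ξ (Submodule.mem_span_singleton_self ξ)
    rwa [real_inner_comm] at this
  have hvn : ‖v‖ ≠ 0 := norm_ne_zero_iff.mpr hv0
  set η : EuclideanSpace ℝ (Fin 3) := ‖v‖⁻¹ • v with hη
  have hη1 : ‖η‖ = 1 := by
    rw [hη, norm_smul, norm_inv, norm_norm, inv_mul_cancel₀ hvn]
  have hηξ : ⟪η, ξ⟫ = 0 := by rw [hη, real_inner_smul_left, hvξ, mul_zero]
  clear_value η
  set a : ℝ := -τ / ‖ξ‖ with ha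
  have ha2 : a ^ 2 ≤ 1 := by
    rw [ha, div_pow, neg_pow]
    rw [div_le_one (by positivity)]
    simpa using hsp.le
  clear_value a
  set b : ℝ := Real.sqrt (1 - a ^ 2) with hb
  have hb2 : b ^ 2 = 1 - a ^ 2 := Real.sq_sqrt (by linarith)
  clear_value b
  set u : EuclideanSpace ℝ (Fin 3) := ‖ξ‖⁻¹ • ξ with hu
  have hu1 : ‖u‖ = 1 := by
    rw [hu, norm_smul, norm_inv, norm_norm, inv_mul_cancel₀ hξn.ne']
  have huη : ⟪u, η⟫ = 0 := by
    rw [hu, real_inner_smul_left, real_inner_comm, hηξ, mul_zero]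
  have huξ : ⟪u, ξ⟫ = ‖ξ‖ := by
    rw [hu, real_inner_smul_left, real_inner_self_eq_norm_sq, sq, ← mul_assoc,
      inv_mul_cancel₀ hξn.ne', one_mul]
  clear_value u
  refine ⟨a • u + b • η, ?_, ?_⟩
  · have hperp : ⟪a • u, b • η⟫ = 0 := by
      rw [real_inner_smul_left, real_inner_smul_right, huη]; ring
    have hns := norm_add_sq_real (a • u) (b • η)
    rw [hperp] at hns
    have hsq : ‖a • u + b • η‖ ^ 2 = 1 := by
      rw [hns, norm_smul, norm_smul, hu1, hη1, mul_one, mul_one,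
        Real.norm_eq_abs, Real.norm_eq_abs, sq_abs, sq_abs]
      linarith
    have h0 : (0:ℝ) ≤ ‖a • u + b • η‖ := norm_nonneg _
    calc ‖a • u + b • η‖ = Real.sqrt (‖a • u + b • η‖ ^ 2) := (Real.sqrt_sq h0).symm
      _ = 1 := by rw [hsq, Real.sqrt_one]
  · rw [inner_add_left, real_inner_smul_left, real_inner_smul_left, hηξ, mul_zero, add_zero,
      huξ, ha, div_mul_cancel₀ _ hξn.ne']

/-- if `f ∈ L¹(ℝ⁴)` is compactly supported and its light ray transform
`Lf(x,θ) = ∫ f(s, x+sθ) ds` vanishes for all `x ∈ ℝ³` and all `θ ∈ 𝕊²`, then `𝓕f`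
vanishes on the space-like cone `{(τ,ξ) : τ² < |ξ|²}`. -/
theorem fourier_vanishes_on_spacelike_of_lightRay_eq_zero
    (f : ℝ × EuclideanSpace ℝ (Fin 3) → ℂ) (hf : Integrable f)
    (hsupp : HasCompactSupport f)
    (hL : ∀ (x θ : EuclideanSpace ℝ (Fin 3)), ‖θ‖ = 1 → (∫ s : ℝ, f (s, x + s • θ)) = 0)
    (τ : ℝ) (ξ : EuclideanSpace ℝ (Fin 3)) (hsp : τ ^ 2 < ‖ξ‖ ^ 2) :
    spacetimeFourier f τ ξ = 0 := by
  obtain ⟨θ, hθ1, hθξ⟩ := exists_unit_inner_eq ξ τ hsp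
  let T : (ℝ × EuclideanSpace ℝ (Fin 3)) ≃ₜ (ℝ × EuclideanSpace ℝ (Fin 3)) :=
    { toFun := fun p => (p.1, p.2 + p.1 • θ)
      invFun := fun p => (p.1, p.2 - p.1 • θ)
      left_inv := fun p => by simp
      right_inv := fun p => by simp
      continuous_toFun :=
        continuous_fst.prodMk (continuous_snd.add (continuous_fst.smul continuous_const))
      continuous_invFun :=
        continuous_fst.prodMk (continuous_snd.sub (continuous_fst.smul continuous_const)) }
  have hT : MeasurePreserving T volume volume := by
    rw [show (volume : Measure (ℝ × EuclideanSpace ℝ (Fin 3)))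
        = (volume : Measure ℝ).prod volume from rfl]
    exact (MeasurePreserving.id (volume : Measure ℝ)).skew_product
      (g := fun t x => x + t • θ)
      (measurable_snd.add (measurable_fst.smul_const θ))
      (ae_of_all _ fun t => (measurePreserving_add_right volume (t • θ)).map_eq)
  set F : ℝ × EuclideanSpace ℝ (Fin 3) → ℂ := fun p =>
    Complex.exp (-(Complex.I * ((p.1 * τ + ⟪p.2, ξ⟫ : ℝ) : ℂ))) * f p with hF
  have hexp_norm : ∀ r : ℝ, ‖Complex.exp (-(Complex.I * (r : ℂ)))‖ = 1 := by
    intro r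
    rw [Complex.norm_exp]
    simp
  have hFi : Integrable F := by
    rw [hF]
    apply hf.bdd_mul
    · apply Continuous.aestronglyMeasurable
      have hphase : Continuous fun p : ℝ × EuclideanSpace ℝ (Fin 3) =>
          (p.1 * τ + ⟪p.2, ξ⟫ : ℝ) :=
        (continuous_fst.mul continuous_const).add (continuous_snd.inner continuous_const)
      exact Complex.continuous_exp.comp
        ((continuous_const.mul (Complex.continuous_ofReal.comp hphase)).neg)
    · exact ae_of_all _ fun p => (hexp_norm _).le
  have step1 : spacetimeFourier f τ ξ = ∫ p : ℝ × EuclideanSpace ℝ (Fin 3), F (T p) := by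
    rw [spacetimeFourier, ← hF]
    exact (hT.integral_comp T.toMeasurableEquiv.measurableEmbedding F).symm
  have hGi : Integrable (F ∘ T) :=
    (hT.integrable_comp_emb T.toMeasurableEquiv.measurableEmbedding).mpr hFi
  have hFT : ∀ p : ℝ × EuclideanSpace ℝ (Fin 3), F (T p) =
      Complex.exp (-(Complex.I * ((⟪p.2, ξ⟫ : ℝ) : ℂ))) * f (p.1, p.2 + p.1 • θ) := by
    intro p
    have hin : ⟪p.2 + p.1 • θ, ξ⟫ = ⟪p.2, ξ⟫ - p.1 * τ := by
      rw [inner_add_left, real_inner_smul_left, hθξ]; ring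
    simp only [hF, T, Homeomorph.homeomorph_mk_coe, Equiv.coe_fn_mk, hin]
    norm_num
  rw [step1]
  have hGi' : Integrable (F ∘ T) ((volume : Measure ℝ).prod volume) := hGi
  calc ∫ p : ℝ × EuclideanSpace ℝ (Fin 3), F (T p)
      = ∫ x : EuclideanSpace ℝ (Fin 3), ∫ t : ℝ, F (T (t, x)) := integral_prod_symm _ hGi'
    _ = ∫ x : EuclideanSpace ℝ (Fin 3), Complex.exp (-(Complex.I * ((⟪x, ξ⟫ : ℝ) : ℂ))) *
          ∫ t : ℝ, f (t, x + t • θ) := by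
        congr 1; ext x
        simp_rw [hFT]
        rw [integral_const_mul]
    _ = 0 := by
        simp_rw [hL _ θ hθ1, mul_zero, integral_zero]
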